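/- Define h : ℝ → ℝ by h(x) = 10·(x + 0.99)²·(9x⁸ + eˣ). Then h is strictly increasing on the interval (−0.99, −0.72], h is strictly decreasing on the interval [−1.069, −1], and 0 < h(x) < 1 for every x ∈ (−0.99, −0.72] and for every x ∈ [−1.069, −1]. -/

import Mathlib

/-- `71.28 A⁷ − 90 A⁸` is at most its value at `A = 0.72` for `A ≥ 0.72`. -/
lemma aux_psi (A : ℝ) (h1 : (0.72:ℝ) ≤ A) :
    71.28*A^7 - 90*A^8 ≤ 0.65 := by
  have hA : (0:ℝ) ≤ A := le_trans (by norm_num) h1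
  have key : ∀ k : ℕ, k ≤ 6 → (0.72:ℝ)^k * A^(6-k) ≤ A^6 := by
    intro k hk
    calc (0.72:ℝ)^k * A^(6-k) ≤ A^k * A^(6-k) :=
          mul_le_mul_of_nonneg_right (pow_le_pow_left₀ (by norm_num) h1 k) (pow_nonneg hA _)
      _ = A^6 := by rw [← pow_add]; congr 1; omega
  have k1 := key 1 (by norm_num)
  have k2 := key 2 (by norm_num)
  have k3 := key 3 (by norm_num)
  have k4 := key 4 (by norm_num)
  have k5 := key 5 (by norm_num)
  have k6 := key 6 (by norm_num)
  norm_num at k1 k2 k3 k4 k5 k6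
  have hA6 : (0:ℝ) ≤ A^6 := pow_nonneg hA 6
  have hA7 : (0.72:ℝ)*A^6 ≤ A^7 := by
    calc (0.72:ℝ)*A^6 ≤ A*A^6 := mul_le_mul_of_nonneg_right h1 hA6
      _ = A^7 := by ring
  have hR : (0:ℝ) ≤ 90*A^7 - 6.48*(A^6 + 0.72*A^5 + 0.5184*A^4 + 0.373248*A^3
      + 0.26873856*A^2 + 0.1934917632*A + 0.139314069504) := by linarith
  have hid : 71.28*A^7 - 90*A^8 = 99179645184/152587890625
      - (A - 0.72)*(90*A^7 - 6.48*(A^6 + 0.72*A^5 + 0.5184*A^4 + 0.373248*A^3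
      + 0.26873856*A^2 + 0.1934917632*A + 0.139314069504)) := by ring
  have hnn := mul_nonneg (by linarith : (0:ℝ) ≤ A - 0.72) hR
  rw [hid]
  norm_num
  nlinarith [hnn]

/-- Polynomial lower bound for all `x ≤ -0.72`. -/
lemma aux_poly (x : ℝ) (h2 : x ≤ -0.72) :
    (-0.65:ℝ) ≤ 90*x^8 + 71.28*x^7 := by
  have := aux_psi (-x) (by linarith)
  nlinarith [this]

lemma aux_exp_low (x : ℝ) (h1 : (-0.99:ℝ) ≤ x) : (0.367:ℝ) ≤ Real.exp x := by
  have h9 := Real.exp_one_lt_d9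
  have hp := Real.exp_pos 1
  have hmono : Real.exp (-1) ≤ Real.exp x := Real.exp_le_exp.2 (by linarith)
  have hinv : Real.exp (-1) * Real.exp 1 = 1 := by
    rw [← Real.exp_add]; norm_num
  nlinarith [Real.exp_pos (-1)]

lemma aux_exp_up72 : Real.exp (-0.72:ℝ) ≤ 0.582 := by
  have h := Real.add_one_le_exp (0.72:ℝ)
  have hp := Real.exp_pos (0.72:ℝ)
  have hinv : Real.exp (-0.72:ℝ) * Real.exp (0.72:ℝ) = 1 := by
    rw [← Real.exp_add]; norm_num
  nlinarith [Real.exp_pos (-0.72:ℝ)]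

lemma aux_exp_up1069 : Real.exp (-1.069:ℝ) ≤ 0.4834 := by
  have h := Real.add_one_le_exp (1.069:ℝ)
  have hp := Real.exp_pos (1.069:ℝ)
  have hinv : Real.exp (-1.069:ℝ) * Real.exp (1.069:ℝ) = 1 := by
    rw [← Real.exp_add]; norm_num
  nlinarith [Real.exp_pos (-1.069:ℝ)]

lemma aux_deriv (x : ℝ) :
    HasDerivAt (fun y : ℝ => 10 * (y + 0.99) ^ 2 * (9 * y ^ 8 + Real.exp y))
      (10 * ((x + 0.99) * (90*x^8 + 71.28*x^7 + Real.exp x * (x + 2.99)))) x := by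
  have p1 : HasDerivAt (fun y : ℝ => (y + 0.99) ^ 2) (2*(x+0.99)) x := by
    simpa using ((hasDerivAt_id x).add_const (0.99:ℝ)).fun_pow 2
  have p2 : HasDerivAt (fun y : ℝ => 9 * y ^ 8 + Real.exp y) (72*x^7 + Real.exp x) x := by
    have := ((hasDerivAt_pow 8 x).const_mul (9:ℝ)).fun_add (Real.hasDerivAt_exp x)
    refine this.congr_deriv ?_
    push_cast
    ring
  have h3 := (p1.fun_mul p2).const_mul (10:ℝ)
  have hf : (fun y : ℝ => 10 * ((y + 0.99) ^ 2 * (9 * y ^ 8 + Real.exp y)))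
      = fun y : ℝ => 10 * (y + 0.99) ^ 2 * (9 * y ^ 8 + Real.exp y) := by
    funext y; ring
  rw [hf] at h3
  refine h3.congr_deriv ?_
  ring

theorem stmt_16 (h : ℝ → ℝ)
    (hh : ∀ x : ℝ, h x = 10 * (x + 0.99) ^ 2 * (9 * x ^ 8 + Real.exp x)) :
    StrictMonoOn h (Set.Ioc (-0.99 : ℝ) (-0.72)) ∧
      StrictAntiOn h (Set.Icc (-1.069 : ℝ) (-1)) ∧
      (∀ x ∈ Set.Ioc (-0.99 : ℝ) (-0.72), 0 < h x ∧ h x < 1) ∧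
      (∀ x ∈ Set.Icc (-1.069 : ℝ) (-1), 0 < h x ∧ h x < 1) := by
  have hfun : h = fun x : ℝ => 10 * (x + 0.99) ^ 2 * (9 * x ^ 8 + Real.exp x) := funext hh
  subst hfun
  have hcont : Continuous (fun x : ℝ => 10 * (x + 0.99) ^ 2 * (9 * x ^ 8 + Real.exp x)) := by
    fun_prop
  have hderiv : ∀ x : ℝ, deriv (fun x : ℝ => 10 * (x + 0.99) ^ 2 * (9 * x ^ 8 + Real.exp x)) x
      = 10 * ((x + 0.99) * (90*x^8 + 71.28*x^7 + Real.exp x * (x + 2.99))) :=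
    fun x => (aux_deriv x).deriv
  have hmono : StrictMonoOn (fun x : ℝ => 10 * (x + 0.99) ^ 2 * (9 * x ^ 8 + Real.exp x))
      (Set.Ioc (-0.99 : ℝ) (-0.72)) := by
    apply strictMonoOn_of_deriv_pos (convex_Ioc _ _) hcont.continuousOn
    intro x hx
    rw [interior_Ioc] at hx
    obtain ⟨hx1, hx2⟩ := hx
    rw [hderiv]
    have hpoly := aux_poly x (le_of_lt hx2)
    have hex := aux_exp_low x (le_of_lt hx1)
    have hprod : (0.367:ℝ) * 2 ≤ Real.exp x * (x + 2.99) :=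
      mul_le_mul hex (by linarith) (by norm_num) (by linarith)
    have hbr : (0:ℝ) < 90*x^8 + 71.28*x^7 + Real.exp x * (x + 2.99) := by linarith
    have := mul_pos (show (0:ℝ) < x + 0.99 by linarith) hbr
    linarith
  have hanti : StrictAntiOn (fun x : ℝ => 10 * (x + 0.99) ^ 2 * (9 * x ^ 8 + Real.exp x))
      (Set.Icc (-1.069 : ℝ) (-1)) := by
    apply strictAntiOn_of_deriv_neg (convex_Icc _ _) hcont.continuousOn
    intro x hx
    rw [interior_Icc] at hx
    obtain ⟨hx1, hx2⟩ := hx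
    rw [hderiv]
    have hx7 : (1:ℝ) ≤ (-x)^7 := by
      have := pow_le_pow_left₀ (by norm_num : (0:ℝ) ≤ 1) (by linarith : (1:ℝ) ≤ -x) 7
      simpa using this
    have hgt : (18.72:ℝ) ≤ (-x^7) * (-(90*x + 71.28)) := by
      have := mul_le_mul hx7 (by linarith : (18.72:ℝ) ≤ -(90*x + 71.28))
        (by norm_num) (by nlinarith)
      nlinarith [this]
    have hex : (0:ℝ) < Real.exp x * (x + 2.99) :=
      mul_pos (Real.exp_pos x) (by linarith)
    have hbr : (0:ℝ) < 90*x^8 + 71.28*x^7 + Real.exp x * (x + 2.99) := by nlinarith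
    have := mul_pos (show (0:ℝ) < -(x + 0.99) by linarith) hbr
    nlinarith [this]
  refine ⟨hmono, hanti, ?_, ?_⟩
  · intro x hx
    obtain ⟨hx1, hx2⟩ := hx
    constructor
    · have hsq : (0:ℝ) < (x + 0.99)^2 := pow_pos (by linarith) 2
      have hsum : (0:ℝ) < 9 * x^8 + Real.exp x := by positivity
      have := mul_pos (mul_pos (show (0:ℝ) < 10 by norm_num) hsq) hsum
      exact this
    · have hle : (fun x : ℝ => 10 * (x + 0.99) ^ 2 * (9 * x ^ 8 + Real.exp x)) x
          ≤ (fun x : ℝ => 10 * (x + 0.99) ^ 2 * (9 * x ^ 8 + Real.exp x)) (-0.72) := by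
        rcases eq_or_lt_of_le hx2 with he | hlt
        · rw [he]
        · exact le_of_lt (hmono ⟨hx1, hx2⟩ ⟨by norm_num, le_refl _⟩ hlt)
      have hend : (fun x : ℝ => 10 * (x + 0.99) ^ 2 * (9 * x ^ 8 + Real.exp x)) (-0.72) < 1 := by
        show (10:ℝ) * (-0.72 + 0.99) ^ 2 * (9 * (-0.72:ℝ) ^ 8 + Real.exp (-0.72)) < 1
        nlinarith [aux_exp_up72]
      exact lt_of_le_of_lt hle hend
  · intro x hx
    obtain ⟨hx1, hx2⟩ := hx
    constructor
    · have hsq : (0:ℝ) < (x + 0.99)^2 := by nlinarith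
      have hsum : (0:ℝ) < 9 * x^8 + Real.exp x := by positivity
      have := mul_pos (mul_pos (show (0:ℝ) < 10 by norm_num) hsq) hsum
      exact this
    · have hle : (fun x : ℝ => 10 * (x + 0.99) ^ 2 * (9 * x ^ 8 + Real.exp x)) x
          ≤ (fun x : ℝ => 10 * (x + 0.99) ^ 2 * (9 * x ^ 8 + Real.exp x)) (-1.069) := by
        rcases eq_or_lt_of_le hx1 with he | hlt
        · rw [← he]
        · exact le_of_lt (hanti ⟨le_refl _, by norm_num⟩ ⟨hx1, hx2⟩ hlt)
      have hend : (fun x : ℝ => 10 * (x + 0.99) ^ 2 * (9 * x ^ 8 + Real.exp x)) (-1.069) < 1 := by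
        show (10:ℝ) * (-1.069 + 0.99) ^ 2 * (9 * (-1.069:ℝ) ^ 8 + Real.exp (-1.069)) < 1
        nlinarith [aux_exp_up1069]
      exact lt_of_le_of_lt hle hend
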